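/- Every minimal NFA accepting a block language L ⊆ Σ^ℓ, with |Σ| = k ≥ 2, has at most min(k^(ℓ−i), k^i) states in each rank i ∈ [0,ℓ]; consequently the nondeterministic state complexity of L is at most 2·(k^(ℓ/2)−1)/(k−1) + k^(ℓ/2) if ℓ is even, and at most 2·(k^(⌈ℓ/2⌉)−1)/(k−1) if ℓ is odd. -/

import Mathlib

set_option maxHeartbeats 1000000

/-- Nondeterministic state complexity: the minimal number of states of an NFA accepting `L`. -/
noncomputable def nsc {α : Type} (L : Language α) : ℕ :=
  sInf {n | ∃ M : NFA α (Fin n), M.accepts = L}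

/-- The rank of a state of an NFA: the maximal length of a word accepted from that state. -/
noncomputable def rankOf {α σ : Type*} (M : NFA α σ) (q : σ) : ℕ :=
  sSup {n | ∃ w : List α, w.length = n ∧ (M.evalFrom {q} w ∩ M.accept).Nonempty}

/-- right language membership -/
def RL {α σ : Type*} (M : NFA α σ) (q : σ) (x : List α) : Prop :=
  (M.evalFrom {q} x ∩ M.accept).Nonempty

namespace RLfacts

variable {α : Type*} {σ τ : Type*} (M : NFA α σ)

lemma mem_evalFrom : ∀ (x : List α) (S : Set σ) (r : σ),
    r ∈ M.evalFrom S x ↔ ∃ q ∈ S, r ∈ M.evalFrom {q} x := by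
  intro x
  induction x with
  | nil => intro S r; simp
  | cons a x ih =>
    intro S r
    show r ∈ M.evalFrom (M.stepSet S a) x ↔ ∃ q ∈ S, r ∈ M.evalFrom (M.stepSet {q} a) x
    constructor
    · rintro h
      rw [ih] at h
      obtain ⟨p, hp, hr⟩ := h
      rw [NFA.mem_stepSet] at hp
      obtain ⟨q, hq, hpq⟩ := hp
      refine ⟨q, hq, ?_⟩
      rw [ih]
      exact ⟨p, by rw [NFA.mem_stepSet]; exact ⟨q, rfl, hpq⟩, hr⟩
    · rintro ⟨q, hq, hr⟩
      rw [ih] at hr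
      obtain ⟨p, hp, hr⟩ := hr
      rw [NFA.mem_stepSet] at hp
      obtain ⟨q', hq', hpq⟩ := hp
      rw [ih]
      refine ⟨p, ?_, hr⟩
      rw [NFA.mem_stepSet]
      cases hq'
      exact ⟨q, hq, hpq⟩

lemma nonempty_iff (x : List α) (S : Set σ) :
    (M.evalFrom S x ∩ M.accept).Nonempty ↔ ∃ q ∈ S, RL M q x := by
  constructor
  · rintro ⟨r, hr, hacc⟩
    rw [mem_evalFrom] at hr
    obtain ⟨q, hq, hr⟩ := hr
    exact ⟨q, hq, ⟨r, hr, hacc⟩⟩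
  · rintro ⟨q, hq, r, hr, hacc⟩
    refine ⟨r, ?_, hacc⟩
    rw [mem_evalFrom]
    exact ⟨q, hq, hr⟩

lemma RL_nil (q : σ) : RL M q [] ↔ q ∈ M.accept := by
  unfold RL
  simp [Set.inter_nonempty]

lemma RL_cons (q : σ) (a : α) (x : List α) :
    RL M q (a :: x) ↔ ∃ r ∈ M.step q a, RL M r x := by
  unfold RL
  show (M.evalFrom (M.stepSet {q} a) x ∩ M.accept).Nonempty ↔ _
  rw [nonempty_iff]
  constructor
  · rintro ⟨r, hr, h⟩
    rw [NFA.mem_stepSet] at hr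
    obtain ⟨q', hq', hr⟩ := hr
    cases hq'
    exact ⟨r, hr, h⟩
  · rintro ⟨r, hr, h⟩
    exact ⟨r, by rw [NFA.mem_stepSet]; exact ⟨q, rfl, hr⟩, h⟩

lemma accepts_iff (x : List α) : x ∈ M.accepts ↔ ∃ q ∈ M.start, RL M q x := by
  rw [NFA.mem_accepts, ← nonempty_iff]
  constructor
  · rintro ⟨r, hr, h⟩; exact ⟨r, h, hr⟩
  · rintro ⟨r, hr, h⟩; exact ⟨r, h, hr⟩

lemma eval_step {q r : σ} {u : List α} {a : α} (hq : q ∈ M.eval u) (hr : r ∈ M.step q a) :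
    r ∈ M.eval (u ++ [a]) := by
  rw [NFA.eval_append_singleton, NFA.mem_stepSet]
  exact ⟨q, hq, hr⟩

lemma eval_RL_accepts {q : σ} {u x : List α} (hq : q ∈ M.eval u) (hx : RL M q x) :
    (u ++ x) ∈ M.accepts := by
  rw [accepts_iff, ← nonempty_iff]
  show (M.evalFrom M.start (u ++ x) ∩ M.accept).Nonempty
  have : M.evalFrom M.start (u ++ x) = M.evalFrom (M.eval u) x := by
    simp [NFA.evalFrom, List.foldl_append, NFA.eval]
  rw [this, nonempty_iff]
  exact ⟨q, hq, hx⟩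

/-- simulation lemma -/
lemma SIM (M' : NFA α τ) (R : τ → List α → Prop)
    (hnil : ∀ t, R t [] ↔ t ∈ M'.accept)
    (hcons : ∀ t a x, R t (a :: x) ↔ ∃ t' ∈ M'.step t a, R t' x) :
    ∀ (x : List α) (t : τ), RL M' t x ↔ R t x := by
  intro x
  induction x with
  | nil => intro t; rw [RL_nil, hnil]
  | cons a x ih =>
    intro t
    rw [RL_cons, hcons]
    exact exists_congr fun t' => and_congr_right fun _ => ih t'

end RLfacts

open RLfacts

section Transport

variable {α : Type} {σ τ : Type}

/-- transport an NFA along an equivalence of state types -/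
def NFA.equivMap (M : NFA α σ) (e : σ ≃ τ) : NFA α τ where
  step := fun t a => {t' | e.symm t' ∈ M.step (e.symm t) a}
  start := {t | e.symm t ∈ M.start}
  accept := {t | e.symm t ∈ M.accept}

lemma NFA.equivMap_accepts (M : NFA α σ) (e : σ ≃ τ) : (M.equivMap e).accepts = M.accepts := by
  have hsim : ∀ (x : List α) (t : τ), RL (M.equivMap e) t x ↔ RL M (e.symm t) x := SIM (M.equivMap e) (fun t x => RL M (e.symm t) x)
    (fun t => (RL_nil M (e.symm t)))
    (fun t a x => by
      show RL M (e.symm t) (a :: x) ↔ ∃ t' ∈ (M.equivMap e).step t a, RL M (e.symm t') x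
      rw [RL_cons]
      constructor
      · rintro ⟨r, hr, h⟩
        exact ⟨e r, by simpa [NFA.equivMap] using hr, by simpa using h⟩
      · rintro ⟨t', ht', h⟩
        exact ⟨e.symm t', ht', h⟩)
  ext x
  rw [accepts_iff, accepts_iff]
  constructor
  · rintro ⟨t, ht, h⟩
    exact ⟨e.symm t, ht, (hsim x t).mp h⟩
  · rintro ⟨q, hq, h⟩
    refine ⟨e q, by simpa [NFA.equivMap] using hq, ?_⟩
    rw [hsim x (e q)]
    simpa using h

end Transport

section Existence

variable {α : Type} [Fintype α]

lemma nsc_set_nonempty (ℓ : ℕ) (L : Language α) (hL : ∀ w ∈ L, w.length = ℓ) :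
    {n | ∃ M : NFA α (Fin n), M.accepts = L}.Nonempty := by
  classical
  set s : Set (List α) := {l : List α | l.length ≤ ℓ} with hs
  have hfin : s.Finite := List.finite_length_le α ℓ
  letI : Fintype s := hfin.fintype
  let M : NFA α s :=
    { step := fun w a => {w' | w.1 = a :: w'.1}
      start := {w | w.1 ∈ L}
      accept := {w | w.1 = []} }
  have hsim : ∀ (x : List α) (w : s), RL M w x ↔ w.1 = x := SIM M (fun w x => w.1 = x)
    (fun t => Iff.rfl)
    (fun t a x => by
      show t.1 = a :: x ↔ ∃ w' ∈ M.step t a, w'.1 = x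
      constructor
      · intro h
        have hx : x.length ≤ ℓ := by
          have := t.2
          simp only [hs, Set.mem_setOf_eq, h] at this
          simpa using Nat.le_of_succ_le this
        exact ⟨⟨x, hx⟩, h, rfl⟩
      · rintro ⟨w', hw', h⟩
        have hw2 : t.1 = a :: w'.1 := hw'
        rw [hw2, h])
  have hacc : M.accepts = L := by
    ext x
    rw [accepts_iff]
    constructor
    · rintro ⟨w, hw, h⟩
      rw [hsim] at h
      rwa [← h]
    · intro hx
      have hxlen : x.length ≤ ℓ := le_of_eq (hL x hx)
      exact ⟨⟨x, hxlen⟩, hx, by rw [hsim]⟩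
  refine ⟨Fintype.card s, ⟨M.equivMap (Fintype.equivFin s), ?_⟩⟩
  rw [NFA.equivMap_accepts, hacc]

lemma nsc_attained (ℓ : ℕ) (L : Language α) (hL : ∀ w ∈ L, w.length = ℓ) :
    ∃ M : NFA α (Fin (nsc L)), M.accepts = L :=
  Nat.sInf_mem (nsc_set_nonempty ℓ L hL)

lemma min_card {σ : Type} [Fintype σ] (M : NFA α σ) (L : Language α) (ℓ : ℕ)
    (hL : ∀ w ∈ L, w.length = ℓ)
    (hMacc : M.accepts = L) (hMcard : Fintype.card σ = nsc L) :
    ∀ (τ : Type) [Fintype τ] (M' : NFA α τ), M'.accepts = L →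
      Fintype.card σ ≤ Fintype.card τ := by
  intro τ _ M' hM'
  have : Fintype.card τ ∈ {n | ∃ M : NFA α (Fin n), M.accepts = L} :=
    ⟨M'.equivMap (Fintype.equivFin τ), by rw [NFA.equivMap_accepts, hM']⟩
  rw [hMcard]
  exact Nat.sInf_le this

end Existence

set_option linter.unusedSectionVars false

section Useful

attribute [local instance] Classical.propDecidable

variable {α σ : Type} [Fintype α] [Fintype σ]

/-- A state is useful if it is reachable and can reach acceptance. -/
def Useful (M : NFA α σ) (q : σ) : Prop := (∃ u, q ∈ M.eval u) ∧ (∃ x, RL M q x)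

lemma all_useful (M : NFA α σ) (L : Language α) (hMacc : M.accepts = L)
    (hmin : ∀ (τ : Type) [Fintype τ] (M' : NFA α τ), M'.accepts = L →
      Fintype.card σ ≤ Fintype.card τ) :
    ∀ q, Useful M q := by
  by_contra hq
  push_neg at hq
  obtain ⟨q₀, hq₀⟩ := hq
  let τ := {q : σ // Useful M q}
  let M' : NFA α τ :=
    { step := fun q a => {r | r.1 ∈ M.step q.1 a}
      start := {q | q.1 ∈ M.start}
      accept := {q | q.1 ∈ M.accept} }
  have hsim : ∀ (x : List α) (q : τ), RL M' q x ↔ RL M q.1 x := by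
    refine SIM M' (fun q x => RL M q.1 x) (fun t => RL_nil M t.1) ?_
    intro t a x
    show RL M t.1 (a :: x) ↔ ∃ t' ∈ M'.step t a, RL M t'.1 x
    rw [RL_cons]
    constructor
    · rintro ⟨r, hr, hx⟩
      obtain ⟨⟨u, hu⟩, -⟩ := t.2
      exact ⟨⟨r, ⟨u ++ [a], eval_step M hu hr⟩, ⟨x, hx⟩⟩, hr, hx⟩
    · rintro ⟨t', ht', hx⟩
      exact ⟨t'.1, ht', hx⟩
  have hacc : M'.accepts = L := by
    ext x
    rw [accepts_iff]
    constructor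
    · rintro ⟨q, hq, h⟩
      rw [hsim] at h
      rw [← hMacc, accepts_iff]
      exact ⟨q.1, hq, h⟩
    · intro hx
      rw [← hMacc, accepts_iff] at hx
      obtain ⟨q, hq, h⟩ := hx
      exact ⟨⟨q, ⟨[], hq⟩, ⟨x, h⟩⟩, hq, (hsim x _).mpr h⟩
  have hlt : Fintype.card τ < Fintype.card σ := Fintype.card_subtype_lt (x := q₀) hq₀
  exact absurd (hmin τ M' hacc) (not_le.mpr hlt)

variable (M : NFA α σ) (L : Language α) (ℓ : ℕ)
  (hMacc : M.accepts = L) (hL : ∀ w ∈ L, w.length = ℓ)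
  (huse : ∀ q, Useful M q)

include hMacc hL

lemma wordLen {q : σ} {u x : List α} (hu : q ∈ M.eval u) (hx : RL M q x) :
    u.length + x.length = ℓ := by
  have := eval_RL_accepts M hu hx
  rw [hMacc] at this
  have := hL _ this
  simpa using this

include huse

lemma rnkEq {q : σ} {u : List α} (hu : q ∈ M.eval u) : rankOf M q = ℓ - u.length := by
  obtain ⟨-, x₀, hx₀⟩ := huse q
  have hset : {n | ∃ w : List α, w.length = n ∧ (M.evalFrom {q} w ∩ M.accept).Nonempty}
      = {ℓ - u.length} := by
    ext n
    simp only [Set.mem_setOf_eq, Set.mem_singleton_iff]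
    constructor
    · rintro ⟨w, hlen, hw⟩
      have := wordLen M L ℓ hMacc hL hu (hw : RL M q w)
      omega
    · intro hn
      refine ⟨x₀, ?_, hx₀⟩
      have := wordLen M L ℓ hMacc hL hu hx₀
      omega
  rw [rankOf, hset, csSup_singleton]

lemma lenLe {q : σ} {u : List α} (hu : q ∈ M.eval u) : u.length ≤ ℓ := by
  obtain ⟨-, x₀, hx₀⟩ := huse q
  have := wordLen M L ℓ hMacc hL hu hx₀
  omega

lemma rnkLe (q : σ) : rankOf M q ≤ ℓ := by
  obtain ⟨⟨u, hu⟩, -⟩ := huse q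
  rw [rnkEq M L ℓ hMacc hL huse hu]
  omega

lemma stepRnk {q r : σ} {a : α} (hr : r ∈ M.step q a) :
    rankOf M r + 1 = rankOf M q := by
  obtain ⟨⟨u, hu⟩, -⟩ := huse q
  have hru : r ∈ M.eval (u ++ [a]) := eval_step M hu hr
  obtain ⟨-, x, hx⟩ := huse r
  have h1 := wordLen M L ℓ hMacc hL hru hx
  rw [rnkEq M L ℓ hMacc hL huse hu, rnkEq M L ℓ hMacc hL huse hru]
  simp only [List.length_append, List.length_singleton] at h1 ⊢
  omega

lemma accRnk {q : σ} (hq : q ∈ M.accept) : rankOf M q = 0 := by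
  obtain ⟨⟨u, hu⟩, -⟩ := huse q
  have := wordLen M L ℓ hMacc hL hu ((RL_nil M q).mpr hq)
  rw [rnkEq M L ℓ hMacc hL huse hu]
  simp at this
  omega

lemma rnk0Acc {q : σ} (h : rankOf M q = 0) : q ∈ M.accept := by
  obtain ⟨⟨u, hu⟩, x, hx⟩ := huse q
  have h1 := wordLen M L ℓ hMacc hL hu hx
  rw [rnkEq M L ℓ hMacc hL huse hu] at h
  have hxnil : x = [] := by
    have : x.length = 0 := by omega
    simpa using this
  rw [hxnil, RL_nil] at hx
  exact hx

lemma RLlen {q : σ} {x : List α} (hx : RL M q x) : x.length = rankOf M q := by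
  obtain ⟨⟨u, hu⟩, -⟩ := huse q
  have h1 := wordLen M L ℓ hMacc hL hu hx
  rw [rnkEq M L ℓ hMacc hL huse hu]
  omega

lemma startRnk {q : σ} (hq : q ∈ M.start) : rankOf M q = ℓ := by
  have : q ∈ M.eval [] := hq
  rw [rnkEq M L ℓ hMacc hL huse this]
  simp

lemma rnklStart {q : σ} (h : rankOf M q = ℓ) : q ∈ M.start := by
  obtain ⟨⟨u, hu⟩, -⟩ := huse q
  have h2 := lenLe M L ℓ hMacc hL huse hu
  rw [rnkEq M L ℓ hMacc hL huse hu] at h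
  have : u.length = 0 := by omega
  have hu0 : u = [] := by simpa using this
  rw [hu0] at hu
  exact hu

end Useful

section Surgery

attribute [local instance] Classical.propDecidable

variable {α σ : Type} [Fintype α] [Fintype σ]
variable (M : NFA α σ) (L : Language α) (ℓ : ℕ)
  (hMacc : M.accepts = L) (hL : ∀ w ∈ L, w.length = ℓ)
  (huse : ∀ q, Useful M q)
  (hmin : ∀ (τ : Type) [Fintype τ] (M' : NFA α τ), M'.accepts = L →
      Fintype.card σ ≤ Fintype.card τ)
  (hℓ : 0 < ℓ)

include hMacc hL huse hmin hℓ

lemma topOne : Fintype.card {q : σ // rankOf M q = ℓ} ≤ 1 := by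
  by_contra hcon
  push_neg at hcon
  let τ := {q : σ // rankOf M q ≠ ℓ} ⊕ Unit
  let M' : NFA α τ :=
    { step := fun t a => Sum.elim
        (fun q => {t' | ∃ r, ∃ h : rankOf M r ≠ ℓ, t' = Sum.inl ⟨r, h⟩ ∧ r ∈ M.step q.1 a})
        (fun _ => {t' | ∃ r, ∃ h : rankOf M r ≠ ℓ, t' = Sum.inl ⟨r, h⟩ ∧
          ∃ q ∈ M.start, r ∈ M.step q a}) t
      start := {t | t = Sum.inr ()}
      accept := {t | ∃ q, ∃ h : rankOf M q ≠ ℓ, t = Sum.inl ⟨q, h⟩ ∧ q ∈ M.accept} }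
  have hsim : ∀ (x : List α) (t : τ), RL M' t x ↔
      Sum.elim (fun (q : {q : σ // rankOf M q ≠ ℓ}) x => RL M q.1 x)
        (fun (_ : Unit) x => ∃ q ∈ M.start, RL M q x) t x := by
    refine SIM M' _ ?_ ?_
    · rintro (q | u)
      · show RL M q.1 [] ↔ _
        rw [RL_nil]
        constructor
        · intro h; exact ⟨q.1, q.2, rfl, h⟩
        · rintro ⟨r, h, heq, hr⟩
          obtain ⟨rfl⟩ : (⟨r, h⟩ : {q : σ // rankOf M q ≠ ℓ}) = q := by
            exact Sum.inl.inj heq.symm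
          exact hr
      · show (∃ q ∈ M.start, RL M q []) ↔ _
        constructor
        · rintro ⟨q, hq, hacc⟩
          rw [RL_nil] at hacc
          have h1 := startRnk M L ℓ hMacc hL huse hq
          have h2 := accRnk M L ℓ hMacc hL huse hacc
          omega
        · rintro ⟨r, h, heq, -⟩
          exact absurd heq (by simp)
    · rintro (q | u) a x
      · show RL M q.1 (a :: x) ↔ _
        rw [RL_cons]
        constructor
        · rintro ⟨r, hr, hx⟩
          have hrk : rankOf M r ≠ ℓ := by
            have h1 := stepRnk M L ℓ hMacc hL huse hr
            have h2 := rnkLe M L ℓ hMacc hL huse q.1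
            omega
          exact ⟨Sum.inl ⟨r, hrk⟩, ⟨r, hrk, rfl, hr⟩, hx⟩
        · rintro ⟨t', ⟨r, h, rfl, hr⟩, hx⟩
          exact ⟨r, hr, hx⟩
      · show (∃ q ∈ M.start, RL M q (a :: x)) ↔ _
        constructor
        · rintro ⟨q, hq, hx⟩
          rw [RL_cons] at hx
          obtain ⟨r, hr, hx⟩ := hx
          have hrk : rankOf M r ≠ ℓ := by
            have h1 := stepRnk M L ℓ hMacc hL huse hr
            have h2 := startRnk M L ℓ hMacc hL huse hq
            omega
          exact ⟨Sum.inl ⟨r, hrk⟩, ⟨r, hrk, rfl, q, hq, hr⟩, hx⟩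
        · rintro ⟨t', ⟨r, h, rfl, q, hq, hr⟩, hx⟩
          refine ⟨q, hq, ?_⟩
          rw [RL_cons]
          exact ⟨r, hr, hx⟩
  have hacc' : M'.accepts = L := by
    ext x
    rw [accepts_iff]
    constructor
    · rintro ⟨t, ht, hx⟩
      have : t = Sum.inr () := ht
      subst this
      rw [hsim] at hx
      obtain ⟨q, hq, hx⟩ := hx
      rw [← hMacc, accepts_iff]
      exact ⟨q, hq, hx⟩
    · intro hx
      rw [← hMacc, accepts_iff] at hx
      refine ⟨Sum.inr (), rfl, ?_⟩
      rw [hsim]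
      exact hx
  have hcard : Fintype.card τ < Fintype.card σ := by
    have h1 : Fintype.card τ = Fintype.card {q : σ // rankOf M q ≠ ℓ} + 1 := by
      simp [τ, Fintype.card_sum]
    have h2 : Fintype.card {q : σ // rankOf M q ≠ ℓ}
        = Fintype.card σ - Fintype.card {q : σ // rankOf M q = ℓ} :=
      Fintype.card_subtype_compl _
    have h3 : Fintype.card {q : σ // rankOf M q = ℓ} ≤ Fintype.card σ :=
      Fintype.card_subtype_le _
    omega
  exact absurd (hmin τ M' hacc') (not_le.mpr hcard)

lemma botOne : Fintype.card {q : σ // rankOf M q = 0} ≤ 1 := by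
  by_contra hcon
  push_neg at hcon
  let τ := {q : σ // rankOf M q ≠ 0} ⊕ Unit
  let M' : NFA α τ :=
    { step := fun t a => Sum.elim
        (fun q => {t' | (∃ r, ∃ h : rankOf M r ≠ 0, t' = Sum.inl ⟨r, h⟩ ∧ r ∈ M.step q.1 a) ∨
          (t' = Sum.inr () ∧ ∃ r ∈ M.step q.1 a, rankOf M r = 0)})
        (fun _ => ∅) t
      start := {t | ∃ q, ∃ h : rankOf M q ≠ 0, t = Sum.inl ⟨q, h⟩ ∧ q ∈ M.start}
      accept := {t | t = Sum.inr ()} }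
  have hsim : ∀ (x : List α) (t : τ), RL M' t x ↔
      Sum.elim (fun (q : {q : σ // rankOf M q ≠ 0}) x => RL M q.1 x)
        (fun (_ : Unit) x => x = []) t x := by
    refine SIM M' _ ?_ ?_
    · rintro (q | u)
      · show RL M q.1 [] ↔ _
        rw [RL_nil]
        constructor
        · intro h
          exact absurd (accRnk M L ℓ hMacc hL huse h) q.2
        · rintro h
          exact absurd h (by simp [M'])
      · show [] = [] ↔ _
        simp [M']
    · rintro (q | u) a x
      · show RL M q.1 (a :: x) ↔ _
        rw [RL_cons]
        constructor
        · rintro ⟨r, hr, hx⟩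
          by_cases hrk : rankOf M r = 0
          · have hx0 : x = [] := by
              have := RLlen M L ℓ hMacc hL huse hx
              rw [hrk] at this
              simpa using this
            exact ⟨Sum.inr (), Or.inr ⟨rfl, r, hr, hrk⟩, hx0⟩
          · exact ⟨Sum.inl ⟨r, hrk⟩, Or.inl ⟨r, hrk, rfl, hr⟩, hx⟩
        · rintro ⟨t', (⟨r, h, rfl, hr⟩ | ⟨rfl, r, hr, hrk⟩), hx⟩
          · exact ⟨r, hr, hx⟩
          · have hx0 : x = [] := hx
            subst hx0
            exact ⟨r, hr, (RL_nil M r).mpr (rnk0Acc M L ℓ hMacc hL huse hrk)⟩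
      · show a :: x = [] ↔ _
        constructor
        · intro h; exact absurd h (by simp)
        · rintro ⟨t', ht', -⟩
          exact absurd ht' (by exact fun h => h.elim)
  have hacc' : M'.accepts = L := by
    ext x
    rw [accepts_iff]
    constructor
    · rintro ⟨t, ⟨q, h, rfl, hq⟩, hx⟩
      rw [hsim] at hx
      rw [← hMacc, accepts_iff]
      exact ⟨q, hq, hx⟩
    · intro hx
      rw [← hMacc, accepts_iff] at hx
      obtain ⟨q, hq, hx⟩ := hx
      have h : rankOf M q ≠ 0 := by
        have := startRnk M L ℓ hMacc hL huse hq
        omega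
      exact ⟨Sum.inl ⟨q, h⟩, ⟨q, h, rfl, hq⟩, (hsim x _).mpr hx⟩
  have hcard : Fintype.card τ < Fintype.card σ := by
    have h1 : Fintype.card τ = Fintype.card {q : σ // rankOf M q ≠ 0} + 1 := by
      simp [τ, Fintype.card_sum]
    have h2 : Fintype.card {q : σ // rankOf M q ≠ 0}
        = Fintype.card σ - Fintype.card {q : σ // rankOf M q = 0} :=
      Fintype.card_subtype_compl _
    have h3 : Fintype.card {q : σ // rankOf M q = 0} ≤ Fintype.card σ :=
      Fintype.card_subtype_le _
    omega
  exact absurd (hmin τ M' hacc') (not_le.mpr hcard)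

lemma stepDown (i : ℕ) (hiℓ : i + 1 < ℓ) :
    Fintype.card {q : σ // rankOf M q = i + 1} ≤
      Fintype.card α * Fintype.card {p : σ // rankOf M p = i} := by
  by_contra hcon
  push_neg at hcon
  let τ := {q : σ // rankOf M q ≠ i + 1} ⊕ (α × {p : σ // rankOf M p = i})
  let M' : NFA α τ :=
    { step := fun t a => Sum.elim
        (fun q => {t' | (∃ r, ∃ h : rankOf M r ≠ i + 1, t' = Sum.inl ⟨r, h⟩ ∧ r ∈ M.step q.1 a) ∨
          (∃ b p, ∃ hp : rankOf M p = i, t' = Sum.inr (b, ⟨p, hp⟩) ∧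
            ∃ r ∈ M.step q.1 a, rankOf M r = i + 1 ∧ p ∈ M.step r b)})
        (fun bp => {t' | a = bp.1 ∧ ∃ h : rankOf M bp.2.1 ≠ i + 1, t' = Sum.inl ⟨bp.2.1, h⟩}) t
      start := {t | ∃ q, ∃ h : rankOf M q ≠ i + 1, t = Sum.inl ⟨q, h⟩ ∧ q ∈ M.start}
      accept := {t | ∃ q, ∃ h : rankOf M q ≠ i + 1, t = Sum.inl ⟨q, h⟩ ∧ q ∈ M.accept} }
  have hsim : ∀ (x : List α) (t : τ), RL M' t x ↔
      Sum.elim (fun (q : {q : σ // rankOf M q ≠ i + 1}) x => RL M q.1 x)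
        (fun (bp : α × {p : σ // rankOf M p = i}) x => ∃ y, x = bp.1 :: y ∧ RL M bp.2.1 y)
        t x := by
    refine SIM M' _ ?_ ?_
    · rintro (q | bp)
      · show RL M q.1 [] ↔ _
        rw [RL_nil]
        constructor
        · intro h; exact ⟨q.1, q.2, rfl, h⟩
        · rintro ⟨r, h, heq, hr⟩
          obtain ⟨rfl⟩ : (⟨r, h⟩ : {q : σ // rankOf M q ≠ i + 1}) = q :=
            Sum.inl.inj heq.symm
          exact hr
      · show (∃ y, [] = bp.1 :: y ∧ RL M bp.2.1 y) ↔ _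
        constructor
        · rintro ⟨y, hy, -⟩; exact absurd hy (by simp)
        · rintro ⟨r, h, heq, -⟩; exact absurd heq (by simp)
    · rintro (q | bp) a x
      · show RL M q.1 (a :: x) ↔ _
        rw [RL_cons]
        constructor
        · rintro ⟨r, hr, hx⟩
          by_cases hrk : rankOf M r = i + 1
          · have hlen : x.length = i + 1 := by
              rw [← hrk]; exact RLlen M L ℓ hMacc hL huse hx
            obtain ⟨b, y, rfl⟩ : ∃ b y, x = b :: y := by
              cases x with
              | nil => simp at hlen
              | cons b y => exact ⟨b, y, rfl⟩
            rw [RL_cons] at hx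
            obtain ⟨p, hp, hy⟩ := hx
            have hpi : rankOf M p = i := by
              have := stepRnk M L ℓ hMacc hL huse hp
              omega
            exact ⟨Sum.inr (b, ⟨p, hpi⟩),
              Or.inr ⟨b, p, hpi, rfl, r, hr, hrk, hp⟩, y, rfl, hy⟩
          · exact ⟨Sum.inl ⟨r, hrk⟩, Or.inl ⟨r, hrk, rfl, hr⟩, hx⟩
        · rintro ⟨t', (⟨r, h, rfl, hr⟩ | ⟨b, p, hp, rfl, r, hr, hrk, hpstep⟩), hx⟩
          · exact ⟨r, hr, hx⟩
          · obtain ⟨y, rfl, hy⟩ := hx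
            refine ⟨r, hr, ?_⟩
            rw [RL_cons]
            exact ⟨p, hpstep, hy⟩
      · show (∃ y, a :: x = bp.1 :: y ∧ RL M bp.2.1 y) ↔ _
        constructor
        · rintro ⟨y, hy, hRL⟩
          obtain ⟨rfl, rfl⟩ : a = bp.1 ∧ y = x := by
            constructor <;> [exact (List.cons.injEq _ _ _ _ ▸ hy).1;
              exact ((List.cons.injEq _ _ _ _ ▸ hy).2).symm]
          refine ⟨Sum.inl ⟨bp.2.1, ?_⟩, ⟨rfl, ?_, rfl⟩, hRL⟩
          · have := bp.2.2; omega
          · have := bp.2.2; omega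
        · rintro ⟨t', ⟨rfl, h, rfl⟩, hx⟩
          exact ⟨x, rfl, hx⟩
  have hacc' : M'.accepts = L := by
    ext x
    rw [accepts_iff]
    constructor
    · rintro ⟨t, ⟨q, h, rfl, hq⟩, hx⟩
      rw [hsim] at hx
      rw [← hMacc, accepts_iff]
      exact ⟨q, hq, hx⟩
    · intro hx
      rw [← hMacc, accepts_iff] at hx
      obtain ⟨q, hq, hx⟩ := hx
      have h : rankOf M q ≠ i + 1 := by
        have := startRnk M L ℓ hMacc hL huse hq
        omega
      exact ⟨Sum.inl ⟨q, h⟩, ⟨q, h, rfl, hq⟩, (hsim x _).mpr hx⟩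
  have hcard : Fintype.card τ < Fintype.card σ := by
    have h1 : Fintype.card τ = Fintype.card {q : σ // rankOf M q ≠ i + 1}
        + Fintype.card α * Fintype.card {p : σ // rankOf M p = i} := by
      simp [τ, Fintype.card_sum, Fintype.card_prod]
    have h2 : Fintype.card {q : σ // rankOf M q ≠ i + 1}
        = Fintype.card σ - Fintype.card {q : σ // rankOf M q = i + 1} :=
      Fintype.card_subtype_compl _
    have h3 : Fintype.card {q : σ // rankOf M q = i + 1} ≤ Fintype.card σ :=
      Fintype.card_subtype_le _
    omega
  exact absurd (hmin τ M' hacc') (not_le.mpr hcard)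

lemma stepUp (i : ℕ) (h0 : 0 < i) (hiℓ : i < ℓ) :
    Fintype.card {q : σ // rankOf M q = i} ≤
      Fintype.card α * Fintype.card {p : σ // rankOf M p = i + 1} := by
  by_contra hcon
  push_neg at hcon
  let τ := {q : σ // rankOf M q ≠ i} ⊕ ({p : σ // rankOf M p = i + 1} × α)
  let M' : NFA α τ :=
    { step := fun t a => Sum.elim
        (fun q => {t' | (∃ r, ∃ h : rankOf M r ≠ i, t' = Sum.inl ⟨r, h⟩ ∧ r ∈ M.step q.1 a) ∨
          (∃ hq : rankOf M q.1 = i + 1, t' = Sum.inr (⟨q.1, hq⟩, a))})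
        (fun pb => {t' | ∃ s, ∃ h : rankOf M s ≠ i, t' = Sum.inl ⟨s, h⟩ ∧
          ∃ r ∈ M.step pb.1.1 pb.2, s ∈ M.step r a}) t
      start := {t | ∃ q, ∃ h : rankOf M q ≠ i, t = Sum.inl ⟨q, h⟩ ∧ q ∈ M.start}
      accept := {t | ∃ q, ∃ h : rankOf M q ≠ i, t = Sum.inl ⟨q, h⟩ ∧ q ∈ M.accept} }
  have hsim : ∀ (x : List α) (t : τ), RL M' t x ↔
      Sum.elim (fun (q : {q : σ // rankOf M q ≠ i}) x => RL M q.1 x)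
        (fun (pb : {p : σ // rankOf M p = i + 1} × α) x =>
          ∃ r ∈ M.step pb.1.1 pb.2, RL M r x) t x := by
    refine SIM M' _ ?_ ?_
    · rintro (q | pb)
      · show RL M q.1 [] ↔ _
        rw [RL_nil]
        constructor
        · intro h; exact ⟨q.1, q.2, rfl, h⟩
        · rintro ⟨r, h, heq, hr⟩
          obtain ⟨rfl⟩ : (⟨r, h⟩ : {q : σ // rankOf M q ≠ i}) = q :=
            Sum.inl.inj heq.symm
          exact hr
      · show (∃ r ∈ M.step pb.1.1 pb.2, RL M r []) ↔ _
        constructor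
        · rintro ⟨r, hr, hRL⟩
          rw [RL_nil] at hRL
          have h1 := accRnk M L ℓ hMacc hL huse hRL
          have h2 := stepRnk M L ℓ hMacc hL huse hr
          rw [pb.1.2] at h2
          omega
        · rintro ⟨r, h, heq, -⟩; exact absurd heq (by simp)
    · rintro (q | pb) a x
      · show RL M q.1 (a :: x) ↔ _
        rw [RL_cons]
        constructor
        · rintro ⟨r, hr, hx⟩
          by_cases hrk : rankOf M r = i
          · have hq : rankOf M q.1 = i + 1 := by
              have := stepRnk M L ℓ hMacc hL huse hr
              omega
            exact ⟨Sum.inr (⟨q.1, hq⟩, a), Or.inr ⟨hq, rfl⟩, r, hr, hx⟩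
          · exact ⟨Sum.inl ⟨r, hrk⟩, Or.inl ⟨r, hrk, rfl, hr⟩, hx⟩
        · rintro ⟨t', (⟨r, h, rfl, hr⟩ | ⟨hq, rfl⟩), hx⟩
          · exact ⟨r, hr, hx⟩
          · obtain ⟨r, hr, hRL⟩ := hx
            exact ⟨r, hr, hRL⟩
      · show (∃ r ∈ M.step pb.1.1 pb.2, RL M r (a :: x)) ↔ _
        constructor
        · rintro ⟨r, hr, hRL⟩
          rw [RL_cons] at hRL
          obtain ⟨s, hs, hx⟩ := hRL
          have hrk : rankOf M r = i := by
            have := stepRnk M L ℓ hMacc hL huse hr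
            rw [pb.1.2] at this
            omega
          have hsk : rankOf M s ≠ i := by
            have := stepRnk M L ℓ hMacc hL huse hs
            omega
          exact ⟨Sum.inl ⟨s, hsk⟩, ⟨s, hsk, rfl, r, hr, hs⟩, hx⟩
        · rintro ⟨t', ⟨s, h, rfl, r, hr, hs⟩, hx⟩
          refine ⟨r, hr, ?_⟩
          rw [RL_cons]
          exact ⟨s, hs, hx⟩
  have hacc' : M'.accepts = L := by
    ext x
    rw [accepts_iff]
    constructor
    · rintro ⟨t, ⟨q, h, rfl, hq⟩, hx⟩
      rw [hsim] at hx
      rw [← hMacc, accepts_iff]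
      exact ⟨q, hq, hx⟩
    · intro hx
      rw [← hMacc, accepts_iff] at hx
      obtain ⟨q, hq, hx⟩ := hx
      have h : rankOf M q ≠ i := by
        have := startRnk M L ℓ hMacc hL huse hq
        omega
      exact ⟨Sum.inl ⟨q, h⟩, ⟨q, h, rfl, hq⟩, (hsim x _).mpr hx⟩
  have hcard : Fintype.card τ < Fintype.card σ := by
    have h1 : Fintype.card τ = Fintype.card {q : σ // rankOf M q ≠ i}
        + Fintype.card {p : σ // rankOf M p = i + 1} * Fintype.card α := by
      simp [τ, Fintype.card_sum, Fintype.card_prod]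
    have h2 : Fintype.card {q : σ // rankOf M q ≠ i}
        = Fintype.card σ - Fintype.card {q : σ // rankOf M q = i} :=
      Fintype.card_subtype_compl _
    have h3 : Fintype.card {q : σ // rankOf M q = i} ≤ Fintype.card σ :=
      Fintype.card_subtype_le _
    have h4 : Fintype.card α * Fintype.card {p : σ // rankOf M p = i + 1}
        = Fintype.card {p : σ // rankOf M p = i + 1} * Fintype.card α := Nat.mul_comm _ _
    omega
  exact absurd (hmin τ M' hacc') (not_le.mpr hcard)

end Surgery

section Arith

lemma geom (k m : ℕ) (hk : 1 ≤ k) :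
    (k - 1) * ∑ j ∈ Finset.range m, k ^ j = k ^ m - 1 := by
  induction m with
  | zero => simp
  | succ m ih =>
    rw [Finset.sum_range_succ, Nat.mul_add, ih]
    have h1 : (k - 1) * k ^ m = k ^ (m + 1) - k ^ m := by
      rw [Nat.sub_mul, one_mul, ← pow_succ']
    have h2 : 1 ≤ k ^ m := Nat.one_le_pow _ _ hk
    have h3 : k ^ m ≤ k ^ (m + 1) := Nat.pow_le_pow_right hk (by omega)
    omega

lemma geomDiv (k m : ℕ) (hk : 2 ≤ k) :
    ∑ j ∈ Finset.range m, k ^ j = (k ^ m - 1) / (k - 1) := by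
  symm
  apply Nat.div_eq_of_eq_mul_left (by omega)
  rw [← geom k m (by omega), Nat.mul_comm]


lemma minpow (k a b : ℕ) (hk : 1 ≤ k) : min (k ^ a) (k ^ b) = k ^ (min a b) := by
  rcases le_total a b with h | h
  · rw [min_eq_left h, min_eq_left (Nat.pow_le_pow_right hk h)]
  · rw [min_eq_right h, min_eq_right (Nat.pow_le_pow_right hk h)]

lemma sumEven (k : ℕ) (hk : 1 ≤ k) : ∀ m : ℕ,
    ∑ i ∈ Finset.range (2 * m + 1), k ^ (min i (2 * m - i))
      = 2 * ∑ j ∈ Finset.range m, k ^ j + k ^ m := by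
  intro m
  induction m with
  | zero => simp
  | succ m ih =>
    have hb : 2 * (m + 1) = (2 * m + 1) + 1 := by ring
    rw [hb, Finset.sum_range_succ', Finset.sum_range_succ]
    have hmid : ∀ i ∈ Finset.range (2 * m + 1),
        k ^ (min (i + 1) ((2 * m + 1) + 1 - (i + 1))) = k ^ (min i (2 * m - i)) * k := by
      intro i hi
      rw [Finset.mem_range] at hi
      rw [← pow_succ]
      congr 1
      omega
    rw [Finset.sum_congr rfl hmid, ← Finset.sum_mul, ih]
    have e1 : min ((2 * m + 1) + 1) ((2 * m + 1) + 1 - ((2 * m + 1) + 1)) = 0 := by omega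
    have e2 : min 0 ((2 * m + 1) + 1 - 0) = 0 := by omega
    rw [e1, e2, pow_zero]
    have hmid2 : ∀ j ∈ Finset.range m, k ^ (j + 1) = k ^ j * k := fun j _ => pow_succ k j
    have hR : ∑ j ∈ Finset.range (m + 1), k ^ j
        = (∑ j ∈ Finset.range m, k ^ j) * k + 1 := by
      rw [Finset.sum_range_succ', Finset.sum_congr rfl hmid2, ← Finset.sum_mul, pow_zero]
    rw [hR, pow_succ]
    ring

lemma sumOdd (k : ℕ) (hk : 1 ≤ k) : ∀ m : ℕ,
    ∑ i ∈ Finset.range (2 * m + 2), k ^ (min i (2 * m + 1 - i))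
      = 2 * ∑ j ∈ Finset.range (m + 1), k ^ j := by
  intro m
  induction m with
  | zero =>
    rw [Finset.sum_range_succ, Finset.sum_range_one]
    norm_num
  | succ m ih =>
    have hb1 : 2 * (m + 1) + 2 = ((2 * m + 2) + 1) + 1 := by ring
    have hb2 : 2 * (m + 1) + 1 = (2 * m + 2) + 1 := by ring
    rw [hb1, hb2, Finset.sum_range_succ', Finset.sum_range_succ]
    have hmid : ∀ i ∈ Finset.range (2 * m + 2),
        k ^ (min (i + 1) ((2 * m + 2) + 1 - (i + 1))) = k ^ (min i (2 * m + 1 - i)) * k := by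
      intro i hi
      rw [Finset.mem_range] at hi
      rw [← pow_succ]
      congr 1
      omega
    rw [Finset.sum_congr rfl hmid, ← Finset.sum_mul, ih]
    have e1 : min ((2 * m + 2) + 1) ((2 * m + 2) + 1 - ((2 * m + 2) + 1)) = 0 := by omega
    have e2 : min 0 ((2 * m + 2) + 1 - 0) = 0 := by omega
    rw [e1, e2, pow_zero]
    have hmid2 : ∀ j ∈ Finset.range (m + 1), k ^ (j + 1) = k ^ j * k :=
      fun j _ => pow_succ k j
    have hR : ∑ j ∈ Finset.range (m + 1 + 1), k ^ j
        = (∑ j ∈ Finset.range (m + 1), k ^ j) * k + 1 := by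
      rw [Finset.sum_range_succ', Finset.sum_congr rfl hmid2, ← Finset.sum_mul, pow_zero]
    rw [hR]
    ring

end Arith

section Chains

attribute [local instance] Classical.propDecidable

variable {α σ : Type} [Fintype α] [Fintype σ]
variable (M : NFA α σ) (L : Language α) (ℓ k : ℕ)
  (hMacc : M.accepts = L) (hL : ∀ w ∈ L, w.length = ℓ)
  (huse : ∀ q, Useful M q)
  (hmin : ∀ (τ : Type) [Fintype τ] (M' : NFA α τ), M'.accepts = L →
      Fintype.card σ ≤ Fintype.card τ)
  (hℓ : 0 < ℓ) (hk : 2 ≤ k) (hcard : Fintype.card α = k)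

include hMacc hL huse hmin hℓ hk hcard

lemma upChain : ∀ i, i < ℓ → Fintype.card {q : σ // rankOf M q = i} ≤ k ^ i := by
  intro i
  induction i with
  | zero =>
    intro _
    have := botOne M L ℓ hMacc hL huse hmin hℓ
    simpa using this
  | succ i ih =>
    intro hi
    have h1 := stepDown M L ℓ hMacc hL huse hmin hℓ i hi
    have h2 := ih (by omega)
    calc Fintype.card {q : σ // rankOf M q = i + 1}
        ≤ Fintype.card α * Fintype.card {p : σ // rankOf M p = i} := h1
      _ ≤ k * k ^ i := by rw [hcard]; exact Nat.mul_le_mul_left k h2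
      _ = k ^ (i + 1) := (pow_succ' k i).symm

lemma downChain : ∀ j, j ≤ ℓ → Fintype.card {q : σ // rankOf M q = ℓ - j} ≤ k ^ j := by
  intro j
  induction j with
  | zero =>
    intro _
    have := topOne M L ℓ hMacc hL huse hmin hℓ
    have e : ℓ - 0 = ℓ := by omega
    rw [e]
    simpa using this
  | succ j ih =>
    intro hj
    by_cases h0 : ℓ - (j + 1) = 0
    · rw [h0]
      have := botOne M L ℓ hMacc hL huse hmin hℓ
      have h1 : (1 : ℕ) ≤ k ^ (j + 1) := Nat.one_le_pow _ _ (by omega)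
      omega
    · have hlt : ℓ - (j + 1) < ℓ := by omega
      have h1 := stepUp M L ℓ hMacc hL huse hmin hℓ (ℓ - (j + 1)) (by omega) hlt
      have e : ℓ - (j + 1) + 1 = ℓ - j := by omega
      rw [e] at h1
      have h2 := ih (by omega)
      calc Fintype.card {q : σ // rankOf M q = ℓ - (j + 1)}
          ≤ Fintype.card α * Fintype.card {p : σ // rankOf M p = ℓ - j} := h1
        _ ≤ k * k ^ j := by rw [hcard]; exact Nat.mul_le_mul_left k h2
        _ = k ^ (j + 1) := (pow_succ' k j).symm

lemma rankBound (i : ℕ) (hi : i ≤ ℓ) :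
    Fintype.card {q : σ // rankOf M q = i} ≤ min (k ^ (ℓ - i)) (k ^ i) := by
  refine le_min ?_ ?_
  · have h := downChain M L ℓ k hMacc hL huse hmin hℓ hk hcard (ℓ - i) (by omega)
    have e : ℓ - (ℓ - i) = i := by omega
    rwa [e] at h
  · by_cases hlt : i < ℓ
    · exact upChain M L ℓ k hMacc hL huse hmin hℓ hk hcard i hlt
    · have hieq : i = ℓ := by omega
      rw [hieq]
      have := topOne M L ℓ hMacc hL huse hmin hℓ
      have h1 : (1 : ℕ) ≤ k ^ ℓ := Nat.one_le_pow _ _ (by omega)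
      omega

end Chains

section Assemble

attribute [local instance] Classical.propDecidable

lemma card_irrel {T : Type} (i1 i2 : Fintype T) : @Fintype.card T i1 = @Fintype.card T i2 := by
  congr!

lemma ncard_fiber {σ : Type} [Fintype σ] (p : σ → Prop) :
    {q : σ | p q}.ncard = Fintype.card {q : σ // p q} := by
  rw [← Nat.card_coe_set_eq, Nat.card_eq_fintype_card]
  exact Fintype.card_congr (Equiv.subtypeEquivRight fun q => Iff.rfl)

lemma partitionSum {α σ : Type} [Fintype α] [Fintype σ] (M : NFA α σ) (L : Language α) (ℓ : ℕ)
    (hMacc : M.accepts = L) (hL : ∀ w ∈ L, w.length = ℓ) (huse : ∀ q, Useful M q) :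
    Fintype.card σ = ∑ i ∈ Finset.range (ℓ + 1), Fintype.card {q : σ // rankOf M q = i} := by
  have h0 : Fintype.card σ = (Finset.univ : Finset σ).card := rfl
  rw [h0, Finset.card_eq_sum_card_fiberwise
    (f := rankOf M) (t := Finset.range (ℓ + 1))
    (fun q _ => Finset.mem_range.mpr (by
      have := rnkLe M L ℓ hMacc hL huse q
      omega))]
  exact Finset.sum_congr rfl fun i _ => (Fintype.card_subtype _).symm

end Assemble

theorem stmt4 (k ℓ : ℕ) (hk : 2 ≤ k) (hℓ : 0 < ℓ)
    {α : Type} [Fintype α] (hcard : Fintype.card α = k)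
    (L : Language α) (hL : ∀ w ∈ L, w.length = ℓ) :
    (∀ (σ : Type) [Fintype σ] (M : NFA α σ), M.accepts = L →
      Fintype.card σ = nsc L →
      ∀ i ≤ ℓ, {q : σ | rankOf M q = i}.ncard ≤ min (k ^ (ℓ - i)) (k ^ i)) ∧
    (ℓ % 2 = 0 → nsc L ≤ 2 * ((k ^ (ℓ / 2) - 1) / (k - 1)) + k ^ (ℓ / 2)) ∧
    (ℓ % 2 = 1 → nsc L ≤ 2 * ((k ^ ((ℓ + 1) / 2) - 1) / (k - 1))) := by
  classical
  have part1 : ∀ (σ : Type) [Fintype σ] (M : NFA α σ), M.accepts = L →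
      Fintype.card σ = nsc L →
      ∀ i ≤ ℓ, {q : σ | rankOf M q = i}.ncard ≤ min (k ^ (ℓ - i)) (k ^ i) := by
    intro σ _ M hMacc hMcard i hi
    have hmin := min_card M L ℓ hL hMacc hMcard
    have huse := all_useful M L hMacc hmin
    rw [ncard_fiber]
    exact (card_irrel _ _).trans_le
      (rankBound M L ℓ k hMacc hL huse hmin hℓ hk hcard i hi)
  have key : nsc L ≤ ∑ i ∈ Finset.range (ℓ + 1), k ^ (min i (ℓ - i)) := by
    obtain ⟨M₀, hM₀⟩ := nsc_attained ℓ L hL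
    have hMcard : Fintype.card (Fin (nsc L)) = nsc L := Fintype.card_fin _
    have hmin := min_card M₀ L ℓ hL hM₀ hMcard
    have huse := all_useful M₀ L hM₀ hmin
    have hsum := partitionSum M₀ L ℓ hM₀ hL huse
    rw [hMcard] at hsum
    rw [hsum]
    refine Finset.sum_le_sum fun i hi => ?_
    have hb := rankBound M₀ L ℓ k hM₀ hL huse hmin hℓ hk hcard i
      (by rw [Finset.mem_range] at hi; omega)
    rw [minpow k _ _ (by omega), min_comm (ℓ - i) i] at hb
    exact (card_irrel _ _).trans_le hb
  refine ⟨part1, ?_, ?_⟩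
  · intro hpar
    have hm : ℓ = 2 * (ℓ / 2) := by omega
    set m := ℓ / 2 with hmdef
    have h1 : ∑ i ∈ Finset.range (ℓ + 1), k ^ (min i (ℓ - i))
        = 2 * ∑ j ∈ Finset.range m, k ^ j + k ^ m := by
      rw [hm]
      exact sumEven k (by omega) m
    rw [geomDiv k m hk] at h1
    calc nsc L ≤ ∑ i ∈ Finset.range (ℓ + 1), k ^ (min i (ℓ - i)) := key
      _ = 2 * ((k ^ m - 1) / (k - 1)) + k ^ m := h1
  · intro hpar
    have hm : ℓ = 2 * (ℓ / 2) + 1 := by omega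
    set m := ℓ / 2 with hmdef
    have h1 : ∑ i ∈ Finset.range (ℓ + 1), k ^ (min i (ℓ - i))
        = 2 * ∑ j ∈ Finset.range (m + 1), k ^ j := by
      rw [hm]
      exact sumOdd k (by omega) m
    rw [geomDiv k (m + 1) hk] at h1
    have e : (ℓ + 1) / 2 = m + 1 := by omega
    rw [e]
    calc nsc L ≤ ∑ i ∈ Finset.range (ℓ + 1), k ^ (min i (ℓ - i)) := key
      _ = 2 * ((k ^ (m + 1) - 1) / (k - 1)) := h1
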